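/- Let κ be a cardinal and ⟨B_m : m ∈ ω⟩ a decreasing sequence of subsets of κ (B_{m+1} ⊆ B_m). Let n ≥ 1, let C be a set, let F be a function of n+1 ordinal arguments below κ with values in C, let G* : κ → κ, let H be a function of n ordinal arguments below κ with values in C, and let r ∈ ω, such that: whenever α₁ < ... < αₙ < κ, β* ∈ B_{r+1}, and β* > G*(αₙ), then F(α₁,...,αₙ,β*) = H(α₁,...,αₙ). Suppose moreover there exist s ∈ ω, G₁ : κ → κ, and η ∈ C such that H(α₁,...,αₙ) = η for every increasing n-tuple α₁ < ... < αₙ of elements of B_s which is G₁ spread apart. Then, setting G(α) = max(G*(α), G₁(α)) for α < κ and m = max(r+1, s), one has F(α₁,...,α_{n+1}) = η for every increasing (n+1)-tuple α₁ < ... < α_{n+1} of elements of B_m which is G spread apart. -/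

import Mathlib

open Cardinal

/-- An increasing tuple `θ₁ < ... < θₙ` is `G` spread apart if `G 0 < θ₁` and
`G θᵢ₋₁ < θᵢ` for each `i`. -/
def SpreadApartFin {n : ℕ} (G : Ordinal → Ordinal) (θ : Fin n → Ordinal) : Prop :=
  List.Chain (fun a b => G a < b) 0 (List.ofFn θ)

lemma spread_iff {n : ℕ} (G : Ordinal → Ordinal) (θ : Fin n → Ordinal) :
    SpreadApartFin G θ ↔ (∀ h : 0 < n, G 0 < θ ⟨0, h⟩) ∧
      ∀ i (h : i + 1 < n), G (θ ⟨i, by omega⟩) < θ ⟨i + 1, h⟩ := by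
  have hc : SpreadApartFin G θ ↔ (∀ y, (List.ofFn θ).head? = some y → G 0 < y) ∧
      (List.ofFn θ).IsChain (fun a b => G a < b) := by
    rw [SpreadApartFin, List.Chain, List.isChain_cons]; simp
  rw [hc, List.isChain_ofFn]
  refine and_congr ?_ Iff.rfl
  cases n with
  | zero => simp
  | succ k => simp [List.ofFn_succ]

lemma Bmono (B : ℕ → Set Ordinal) (hBdec : ∀ m, B (m + 1) ⊆ B m) {a b : ℕ} (h : a ≤ b) :
    B b ⊆ B a := by
  induction b with
  | zero => simpa [Nat.le_zero.mp h]
  | succ k ih =>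
    rcases Nat.lt_or_ge a (k+1) with h' | h'
    · exact (hBdec k).trans (ih (by omega))
    · have : a = k + 1 := by omega
      simp [this]

/-- The inductive step of the partition lemma: if `F(α₁,…,αₙ,β*) = H(α₁,…,αₙ)`
whenever `α₁ < … < αₙ < κ`, `β* ∈ B_{r+1}` and `β* > G*(αₙ)`, and `H` is
constantly `η` on increasing `G₁` spread apart `n`-tuples from `B_s`, then `F`
is constantly `η` on increasing `max(G*,G₁)` spread apart `(n+1)`-tuples from
`B_{max(r+1,s)}`. -/
theorem partition_inductive_step (κ : Cardinal.{0}) (B : ℕ → Set Ordinal)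
    (hBsub : ∀ m, B m ⊆ Set.Iio κ.ord) (hBdec : ∀ m, B (m + 1) ⊆ B m)
    {C : Type*} (n : ℕ) (hn : 1 ≤ n)
    (F : (Fin (n + 1) → Ordinal) → C) (Gstar : Ordinal → Ordinal)
    (H : (Fin n → Ordinal) → C) (r : ℕ)
    (hFH : ∀ θ : Fin n → Ordinal, StrictMono θ → (∀ i, θ i < κ.ord) →
      ∀ β : Ordinal, β ∈ B (r + 1) → Gstar (θ ⟨n - 1, by omega⟩) < β →
        F (Fin.snoc θ β) = H θ)
    (s : ℕ) (G₁ : Ordinal → Ordinal) (η : C)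
    (hH : ∀ θ : Fin n → Ordinal, StrictMono θ → (∀ i, θ i ∈ B s) →
      SpreadApartFin G₁ θ → H θ = η) :
    ∀ θ : Fin (n + 1) → Ordinal, StrictMono θ → (∀ i, θ i ∈ B (max (r + 1) s)) →
      SpreadApartFin (fun α => max (Gstar α) (G₁ α)) θ → F θ = η := by
  intro θ hmono hB hsp
  rw [spread_iff] at hsp
  set θ' : Fin n → Ordinal := Fin.init θ with hθ'
  have hmono' : StrictMono θ' := fun i j hij => hmono (by simpa using hij)
  have hθ'eq : ∀ i : Fin n, θ' i = θ ⟨i.1, by omega⟩ := fun i => rfl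
  have hβ : θ (Fin.last n) ∈ B (r + 1) :=
    Bmono B hBdec (le_max_left _ _) (hB _)
  have hlt : Gstar (θ' ⟨n - 1, by omega⟩) < θ (Fin.last n) := by
    have h2 := hsp.2 (n - 1) (by omega)
    have e2 : (⟨n - 1 + 1, by omega⟩ : Fin (n + 1)) = Fin.last n := by
      ext; simp; omega
    rw [e2] at h2
    exact lt_of_le_of_lt (le_max_left _ _) h2
  have hκ : ∀ i, θ' i < κ.ord := fun i => hBsub _ (hB _)
  have key := hFH θ' hmono' hκ (θ (Fin.last n)) hβ hlt
  rw [hθ', Fin.snoc_init_self] at key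
  rw [key]
  refine hH θ' hmono' (fun i => Bmono B hBdec (le_max_right _ _) (hB _)) ?_
  rw [spread_iff]
  constructor
  · intro h
    exact lt_of_le_of_lt (le_max_right _ _) (by simpa [hθ'eq] using hsp.1 (by omega))
  · intro i hi
    exact lt_of_le_of_lt (le_max_right _ _) (hsp.2 i (by omega))
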